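/- (Engel's theorem for Lie superalgebras) Let L = L₀ ⊕ L₁ be a finite-dimensional Lie superalgebra over a field of characteristic ≠ 2 such that ad x is a nilpotent linear transformation of L for every homogeneous element x ∈ L₀ ∪ L₁. Then L is nilpotent. -/

import Mathlib

/-- A Lie superalgebra structure on an `F`-module `L`: an internal direct sum
decomposition `L = L₀ ⊕ L₁` together with a bilinear bracket satisfying the grading,
super-anticommutativity and super-Jacobi identities (the latter two stated for
homogeneous arguments and extended by bilinearity). -/
structure LieSuperStruct (F : Type*) (L : Type*) [Field F] [AddCommGroup L]
    [Module F L] where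
  L0 : Submodule F L
  L1 : Submodule F L
  compl : IsCompl L0 L1
  bracket : L →ₗ[F] L →ₗ[F] L
  grade00 : ∀ x ∈ L0, ∀ y ∈ L0, bracket x y ∈ L0
  grade01 : ∀ x ∈ L0, ∀ y ∈ L1, bracket x y ∈ L1
  grade10 : ∀ x ∈ L1, ∀ y ∈ L0, bracket x y ∈ L1
  grade11 : ∀ x ∈ L1, ∀ y ∈ L1, bracket x y ∈ L0
  anti_even : ∀ x ∈ L0, ∀ y : L, bracket x y = - bracket y x
  anti_odd : ∀ x ∈ L1, ∀ y ∈ L1, bracket x y = bracket y x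
  jacobi_even : ∀ x ∈ L0, ∀ y z : L,
    bracket x (bracket y z) = bracket (bracket x y) z + bracket y (bracket x z)
  jacobi_odd_even : ∀ x ∈ L1, ∀ y ∈ L0, ∀ z : L,
    bracket x (bracket y z) = bracket (bracket x y) z + bracket y (bracket x z)
  jacobi_odd_odd : ∀ x ∈ L1, ∀ y ∈ L1, ∀ z : L,
    bracket x (bracket y z) = bracket (bracket x y) z - bracket y (bracket x z)

namespace LieSuperStruct

variable {F L : Type*} [Field F] [AddCommGroup L] [Module F L]

/-- The span of all brackets `(x, y)` with `x ∈ M`, `y ∈ N`. -/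
def bracketSpan (S : LieSuperStruct F L) (M N : Submodule F L) : Submodule F L :=
  Submodule.span F {w | ∃ x ∈ M, ∃ y ∈ N, w = S.bracket x y}

/-- Lower central series of a subalgebra `N`: `γ₁ = N`, `γ_{n+1} = (γₙ, N)`. -/
def lcsOn (S : LieSuperStruct F L) (N : Submodule F L) : ℕ → Submodule F L
  | 0 => N
  | n + 1 => S.bracketSpan (S.lcsOn N n) N

/-- Lower central series of `L` itself. -/
def lcs (S : LieSuperStruct F L) : ℕ → Submodule F L := S.lcsOn ⊤

/-- A Lie superalgebra is nilpotent if its lower central series vanishes. -/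
def IsNilpotent (S : LieSuperStruct F L) : Prop := ∃ n, S.lcs n = ⊥

/-- `A` is an ideal of `L`. -/
def IsIdeal (S : LieSuperStruct F L) (A : Submodule F L) : Prop :=
  ∀ x ∈ A, ∀ y : L, S.bracket x y ∈ A ∧ S.bracket y x ∈ A

/-- `A` is a homogeneous (graded) submodule. -/
def IsHomogeneous (S : LieSuperStruct F L) (A : Submodule F L) : Prop :=
  A = (A ⊓ S.L0) ⊔ (A ⊓ S.L1)

/-- The adjoint map of `x`. -/
def ad (S : LieSuperStruct F L) (x : L) : Module.End F L := S.bracket x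

end LieSuperStruct

/-- The left-normed `n`-fold iterated Lie commutator `[x, y, y, …, y]` in an
associative ring. -/
def engelIter {U : Type*} [Ring U] (y : U) (n : ℕ) (x : U) : U :=
  (fun a => a * y - y * a)^[n] x

/-- An associative ring is bounded Lie Engel if it satisfies `[x, y, …, y] = 0`
(`y` repeated `n` times) identically for some `n ≥ 1`. -/
def IsBoundedLieEngel (U : Type*) [Ring U] : Prop :=
  ∃ n : ℕ, 0 < n ∧ ∀ x y : U, engelIter y n x = 0

/-- The (two-sided) ideal of an associative `F`-algebra generated by all
commutators, as an `F`-submodule. -/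
def commIdeal (F U : Type*) [Field F] [Ring U] [Algebra F U] : Submodule F U :=
  Submodule.span F {w | ∃ a x y b : U, w = a * (x * y - y * x) * b}

/-- Lower central series of the associative algebra `U` viewed as a Lie algebra
under the commutator. -/
def assocLcs (F U : Type*) [Field F] [Ring U] [Algebra F U] : ℕ → Submodule F U
  | 0 => ⊤
  | n + 1 => Submodule.span F {w | ∃ a ∈ assocLcs F U n, ∃ b : U, w = a * b - b * a}

/-- `U` is Lie nilpotent: the lower central series of `(U, [·,·])` terminates. -/
def IsLieNilpotentAlg (F U : Type*) [Field F] [Ring U] [Algebra F U] : Prop :=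
  ∃ n, assocLcs F U n = ⊥

/-- `U` satisfies a (nontrivial) polynomial identity. -/
def IsPI (F U : Type*) [Field F] [Ring U] [Algebra F U] : Prop :=
  ∃ (n : ℕ) (f : FreeAlgebra F (Fin n)), f ≠ 0 ∧
    ∀ v : Fin n → U, FreeAlgebra.lift F v f = 0

/-- `U` satisfies a non-matrix polynomial identity: a PI which fails in `M₂(F)`. -/
def IsNonMatrixPI (F U : Type*) [Field F] [Ring U] [Algebra F U] : Prop :=
  ∃ (n : ℕ) (f : FreeAlgebra F (Fin n)),
    (∀ v : Fin n → U, FreeAlgebra.lift F v f = 0) ∧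
    ∃ w : Fin n → Matrix (Fin 2) (Fin 2) F, FreeAlgebra.lift F w f ≠ 0

/-- `U` together with `ι : L → U` is (a realization of) the universal enveloping
algebra of the Lie superalgebra `L`: `ι` is an injective linear map satisfying the
super-commutation relations, its image generates `U`, and the pair has the
universal property. -/
structure IsUEA (F : Type*) {L : Type*} [Field F] [AddCommGroup L] [Module F L]
    (S : LieSuperStruct F L) (U : Type*) [Ring U] [Algebra F U]
    (ι : L →ₗ[F] U) : Prop where
  rel_even : ∀ x ∈ S.L0, ∀ y : L, ι x * ι y - ι y * ι x = ι (S.bracket x y)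
  rel_odd : ∀ x ∈ S.L1, ∀ y ∈ S.L1, ι x * ι y + ι y * ι x = ι (S.bracket x y)
  inj : Function.Injective ι
  gen : Algebra.adjoin F (Set.range ι) = ⊤
  univ : ∀ (B : Type) [Ring B] [Algebra F B] (φ : L →ₗ[F] B),
    (∀ x ∈ S.L0, ∀ y : L, φ x * φ y - φ y * φ x = φ (S.bracket x y)) →
    (∀ x ∈ S.L1, ∀ y ∈ S.L1, φ x * φ y + φ y * φ x = φ (S.bracket x y)) →
    ∃! ψ : U →ₐ[F] B, ∀ x : L, ψ (ι x) = φ x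

section EngelAux

open LieSuperStruct

variable {F L : Type*} [Field F] [AddCommGroup L] [Module F L]

/-- The lower central series of `L` under the action of the even part `L₀`. -/
def evenChain (S : LieSuperStruct F L) : ℕ → Submodule F L
  | 0 => ⊤
  | n + 1 => Submodule.span F {w | ∃ x ∈ S.L0, ∃ m ∈ evenChain S n, w = S.bracket x m}

lemma evenChain_step (S : LieSuperStruct F L) {x m : L} (hx : x ∈ S.L0) {n : ℕ}
    (hm : m ∈ evenChain S n) : S.bracket x m ∈ evenChain S (n + 1) :=
  Submodule.subset_span ⟨x, hx, m, hm, rfl⟩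

lemma evenChain_term [FiniteDimensional F L] (hchar : ringChar F ≠ 2)
    (S : LieSuperStruct F L)
    (h : ∀ x : L, x ∈ S.L0 ∨ x ∈ S.L1 → IsNilpotent (S.ad x)) :
    ∃ r, evenChain S r = ⊥ := by
  have h2 : (2 : F) ≠ 0 := Ring.two_ne_zero hchar
  letI : LieRing ↥S.L0 :=
    { bracket := fun x y => ⟨S.bracket x y, S.grade00 _ x.2 _ y.2⟩
      add_lie := fun x y z => Subtype.ext <| by
        show S.bracket (↑x + ↑y) ↑z = S.bracket ↑x ↑z + S.bracket ↑y ↑z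
        rw [map_add]; rfl
      lie_add := fun x y z => Subtype.ext <| by
        show S.bracket ↑x (↑y + ↑z) = S.bracket ↑x ↑y + S.bracket ↑x ↑z
        rw [map_add]
      lie_self := fun x => Subtype.ext <| by
        show S.bracket ↑x ↑x = 0
        have hx := S.anti_even ↑x x.2 ↑x
        have h2x : (2 : F) • S.bracket ↑x ↑x = 0 := by
          rw [two_smul]
          nth_rewrite 1 [hx]
          exact neg_add_cancel _
        rcases smul_eq_zero.mp h2x with hc | hv
        · exact absurd hc h2
        · exact hv
      leibniz_lie := fun x y z => Subtype.ext <| by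
        show S.bracket ↑x (S.bracket ↑y ↑z)
            = S.bracket (S.bracket ↑x ↑y) ↑z + S.bracket ↑y (S.bracket ↑x ↑z)
        exact S.jacobi_even ↑x x.2 ↑y ↑z }
  letI : LieAlgebra F ↥S.L0 :=
    { lie_smul := fun t x y => Subtype.ext <| by
        show S.bracket ↑x (t • ↑y) = t • S.bracket ↑x ↑y
        rw [map_smul] }
  letI : LieRingModule ↥S.L0 L :=
    { bracket := fun x m => S.bracket ↑x m
      add_lie := fun x y m => by
        show S.bracket (↑x + ↑y) m = S.bracket ↑x m + S.bracket ↑y m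
        rw [map_add]; rfl
      lie_add := fun x m n => by
        show S.bracket ↑x (m + n) = S.bracket ↑x m + S.bracket ↑x n
        rw [map_add]
      leibniz_lie := fun x y m => by
        show S.bracket ↑x (S.bracket ↑y m)
            = S.bracket (S.bracket ↑x ↑y) m + S.bracket ↑y (S.bracket ↑x m)
        exact S.jacobi_even ↑x x.2 ↑y m }
  letI : LieModule F ↥S.L0 L :=
    { smul_lie := fun t x m => by
        show S.bracket (t • ↑x) m = t • S.bracket ↑x m
        rw [map_smul]; rfl
      lie_smul := fun t x m => by
        show S.bracket ↑x (t • m) = t • S.bracket ↑x m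
        rw [map_smul] }
  have hE : LieAlgebra.IsEngelian F ↥S.L0 := LieAlgebra.isEngelian_of_isNoetherian
  have hnil : LieModule.IsNilpotent ↥S.L0 L := by
    apply hE L
    intro x
    have hx : LieModule.toEnd F ↥S.L0 L x = S.ad ↑x := by
      ext m; rfl
    rw [hx]
    exact h ↑x (Or.inl x.2)
  obtain ⟨k, hk⟩ := (LieModule.isNilpotent_iff F ↥S.L0 L).mp hnil
  refine ⟨k, le_bot_iff.mp ?_⟩
  have key : ∀ j, evenChain S j ≤ (LieModule.lowerCentralSeries F (↥S.L0) L j : Submodule F L) := by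
    intro j
    induction j with
    | zero => simp [evenChain]
    | succ j ih =>
      rw [show evenChain S (j+1) = Submodule.span F
        {w | ∃ x ∈ S.L0, ∃ m ∈ evenChain S j, w = S.bracket x m} from rfl]
      rw [Submodule.span_le]
      rintro w ⟨x, hx, m, hm, rfl⟩
      have : S.bracket x m ∈ LieModule.lowerCentralSeries F (↥S.L0) L (j+1) := by
        rw [LieModule.lowerCentralSeries_succ]
        exact LieSubmodule.lie_mem_lie (LieSubmodule.mem_top (⟨x, hx⟩ : ↥S.L0)) (ih hm)
      exact this
  calc evenChain S k ≤ (LieModule.lowerCentralSeries F (↥S.L0) L k : Submodule F L) := key k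
    _ = ⊥ := by rw [hk]; simp


lemma evenChain_antitone (S : LieSuperStruct F L) :
    ∀ j, evenChain S (j + 1) ≤ evenChain S j := by
  intro j
  induction j with
  | zero => exact le_top
  | succ j ih =>
    rw [show evenChain S (j+2) = Submodule.span F
      {w | ∃ x ∈ S.L0, ∃ m ∈ evenChain S (j+1), w = S.bracket x m} from rfl,
      Submodule.span_le]
    rintro w ⟨x, hx, m, hm, rfl⟩
    exact evenChain_step S hx (ih hm)

/-- The submodule of vectors sent into `Z` by every homogeneous `ad`. -/
def killsInto (S : LieSuperStruct F L) (Z : Submodule F L) : Submodule F L where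
  carrier := {v | ∀ z : L, z ∈ S.L0 ∨ z ∈ S.L1 → S.bracket z v ∈ Z}
  add_mem' := fun {a b} ha hb z hz => by
    rw [map_add]; exact Z.add_mem (ha z hz) (hb z hz)
  zero_mem' := fun z hz => by rw [map_zero]; exact Z.zero_mem
  smul_mem' := fun c a ha z hz => by rw [map_smul]; exact Z.smul_mem c (ha z hz)

lemma mem_killsInto {S : LieSuperStruct F L} {Z : Submodule F L} {v : L} :
    v ∈ killsInto S Z ↔ ∀ z : L, z ∈ S.L0 ∨ z ∈ S.L1 → S.bracket z v ∈ Z := Iff.rfl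

/-- The key step: enlarging the annihilated odd part. -/
lemma odd_step (S : LieSuperStruct F L)
    (h : ∀ x : L, x ∈ S.L0 ∨ x ∈ S.L1 → IsNilpotent (S.ad x))
    [IsNoetherian F L]
    (Z Mi Mi1 : Submodule F L)
    (hZinv : ∀ z : L, z ∈ S.L0 ∨ z ∈ S.L1 → ∀ v ∈ Z, S.bracket z v ∈ Z)
    (hMi : Mi ≤ S.L1) (hMi1 : Mi1 ≤ S.L1)
    (hstep : ∀ x ∈ S.L0, ∀ u ∈ Mi1, S.bracket x u ∈ Mi)
    (prev : ∃ v, v ∉ Z ∧ (∀ x ∈ S.L0, S.bracket x v ∈ Z) ∧ ∀ m ∈ Mi, S.bracket m v ∈ Z) :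
    ∃ v, v ∉ Z ∧ (∀ x ∈ S.L0, S.bracket x v ∈ Z) ∧ ∀ u ∈ Mi1, S.bracket u v ∈ Z := by
  classical
  have key : ∀ us : List L, (∀ u ∈ us, u ∈ S.L1 ∧ ∀ x ∈ S.L0, S.bracket x u ∈ Mi) →
      ∃ v, v ∉ Z ∧ ((∀ x ∈ S.L0, S.bracket x v ∈ Z) ∧ ∀ m ∈ Mi, S.bracket m v ∈ Z) ∧
        ∀ u ∈ us, S.bracket u v ∈ Z := by
    intro us
    induction us with
    | nil =>
      intro _
      obtain ⟨v, h1, h2, h3⟩ := prev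
      exact ⟨v, h1, ⟨h2, h3⟩, by simp⟩
    | cons u us ih =>
      intro hus
      obtain ⟨hu1, hu2⟩ := hus u List.mem_cons_self
      obtain ⟨v, hv, hQ, hk⟩ := ih (fun u' hu' => hus u' (List.mem_cons_of_mem _ hu'))
      set R : L → Prop := fun w =>
        ((∀ x ∈ S.L0, S.bracket x w ∈ Z) ∧ ∀ m ∈ Mi, S.bracket m w ∈ Z) ∧
          ∀ u' ∈ us, S.bracket u' w ∈ Z with hR
      have hclos : ∀ w, R w → R (S.bracket u w) := by
        rintro w ⟨⟨hw0, hwM⟩, hwus⟩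
        refine ⟨⟨?_, ?_⟩, ?_⟩
        · intro x hx
          rw [S.jacobi_even x hx u w]
          exact Z.add_mem (hwM _ (hu2 x hx)) (hZinv u (Or.inr hu1) _ (hw0 x hx))
        · intro m hm
          rw [S.jacobi_odd_odd m (hMi hm) u hu1 w]
          exact Z.sub_mem (hw0 _ (S.grade11 m (hMi hm) u hu1)) (hZinv u (Or.inr hu1) _ (hwM m hm))
        · intro u' hu'
          have hu'1 : u' ∈ S.L1 := (hus u' (List.mem_cons_of_mem _ hu')).1
          rw [S.jacobi_odd_odd u' hu'1 u hu1 w]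
          exact Z.sub_mem (hw0 _ (S.grade11 u' hu'1 u hu1)) (hZinv u (Or.inr hu1) _ (hwus u' hu'))
      obtain ⟨n, hn⟩ := h u (Or.inr hu1)
      have hex : ∃ k, ((S.ad u) ^ k) v ∈ Z := ⟨n, by rw [hn]; simp⟩
      set k := Nat.find hex with hkdef
      have hk0 : k ≠ 0 := by
        intro e
        have := Nat.find_spec hex
        rw [← hkdef, e] at this
        simp only [pow_zero, Module.End.one_apply] at this
        exact hv this
      have hRj : ∀ j, R (((S.ad u) ^ j) v) := by
        intro j
        induction j with
        | zero => simpa using ⟨hQ, hk⟩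
        | succ j ihj =>
          rw [pow_succ', Module.End.mul_apply]
          exact hclos _ ihj
      have hbr : S.bracket u (((S.ad u) ^ (k-1)) v) = ((S.ad u) ^ k) v := by
        conv_rhs => rw [show k = (k-1) + 1 from (Nat.succ_pred_eq_of_ne_zero hk0).symm]
        rw [pow_succ', Module.End.mul_apply]
        rfl
      refine ⟨((S.ad u) ^ (k-1)) v, ?_, (hRj _).1, ?_⟩
      · intro hmem
        exact Nat.find_min hex (by omega) hmem
      · intro u' hu'
        rcases List.mem_cons.mp hu' with rfl | hu'
        · rw [hbr]; exact Nat.find_spec hex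
        · exact (hRj (k-1)).2 u' hu'
  obtain ⟨t, ht⟩ : Mi1.FG := IsNoetherian.noetherian Mi1
  have hmem : ∀ u ∈ t.toList, u ∈ Mi1 := by
    intro u hu
    rw [← ht]
    exact Submodule.subset_span (by simpa using hu)
  obtain ⟨v, hv, hQ, hkl⟩ := key t.toList
    (fun u hu => ⟨hMi1 (hmem u hu), fun x hx => hstep x hx u (hmem u hu)⟩)
  refine ⟨v, hv, hQ.1, ?_⟩
  have hle : Mi1 ≤ Submodule.comap (S.bracket.flip v) Z := by
    rw [← ht, Submodule.span_le]
    intro u hu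
    exact hkl u (by simpa using hu)
  exact fun u hu => hle hu

/-- The common (mod `Z`) annihilated vector lemma. -/
lemma exists_vector [FiniteDimensional F L] (hchar : ringChar F ≠ 2)
    (S : LieSuperStruct F L)
    (h : ∀ x : L, x ∈ S.L0 ∨ x ∈ S.L1 → IsNilpotent (S.ad x))
    (Z : Submodule F L) (hZtop : Z ≠ ⊤)
    (hZinv : ∀ z : L, z ∈ S.L0 ∨ z ∈ S.L1 → ∀ v ∈ Z, S.bracket z v ∈ Z) :
    ∃ v, v ∉ Z ∧ v ∈ killsInto S Z := by
  classical
  obtain ⟨r, hr⟩ := evenChain_term hchar S h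
  -- base of the odd induction : a vector killed (mod Z) by the whole even part
  have hbase : ∃ v, v ∉ Z ∧ ∀ x ∈ S.L0, S.bracket x v ∈ Z := by
    have hex : ∃ j, evenChain S j ⊔ Z = Z := ⟨r, by rw [hr, bot_sup_eq]⟩
    set j0 := Nat.find hex with hj0def
    have hspec : evenChain S j0 ⊔ Z = Z := Nat.find_spec hex
    have hj0ne : j0 ≠ 0 := by
      intro e
      rw [e] at hspec
      rw [show evenChain S 0 = ⊤ from rfl, top_sup_eq] at hspec
      exact hZtop hspec.symm
    have hne : evenChain S (j0 - 1) ⊔ Z ≠ Z := Nat.find_min hex (by omega)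
    have hlt : Z < evenChain S (j0 - 1) ⊔ Z :=
      lt_of_le_of_ne le_sup_right (Ne.symm hne)
    obtain ⟨v, hvmem, hvZ⟩ := SetLike.exists_of_lt hlt
    obtain ⟨c, hc, z, hz, rfl⟩ := Submodule.mem_sup.mp hvmem
    refine ⟨c + z, hvZ, ?_⟩
    intro x hx
    rw [map_add]
    have h1 : S.bracket x c ∈ Z := by
      have : S.bracket x c ∈ evenChain S ((j0 - 1) + 1) := evenChain_step S hx hc
      rw [show (j0 - 1) + 1 = j0 by omega] at this
      rw [← hspec]
      exact le_sup_left (α := Submodule F L) this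
    exact Z.add_mem h1 (hZinv x (Or.inl hx) z hz)
  have claim : ∀ i : ℕ, ∃ v, v ∉ Z ∧ (∀ x ∈ S.L0, S.bracket x v ∈ Z) ∧
      ∀ u ∈ evenChain S (r - i) ⊓ S.L1, S.bracket u v ∈ Z := by
    intro i
    induction i with
    | zero =>
      obtain ⟨v, h1, h2⟩ := hbase
      refine ⟨v, h1, h2, ?_⟩
      intro u hu
      have hu0 : u = 0 := by
        have := hu.1
        rw [Nat.sub_zero, hr] at this
        simpa using this
      rw [hu0, map_zero]
      simp
    | succ i ih =>
      refine odd_step S h Z (evenChain S (r - i) ⊓ S.L1) (evenChain S (r - (i+1)) ⊓ S.L1)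
        hZinv inf_le_right inf_le_right ?_ ih
      intro x hx u hu
      refine ⟨?_, S.grade01 x hx u hu.2⟩
      by_cases hir : i < r
      · rw [show r - i = (r - (i+1)) + 1 by omega]
        exact evenChain_step S hx hu.1
      · rw [show r - i = 0 by omega]
        trivial
  obtain ⟨v, hv1, hv2, hv3⟩ := claim r
  refine ⟨v, hv1, ?_⟩
  rw [mem_killsInto]
  intro z hz
  rcases hz with hz0 | hz1
  · exact hv2 z hz0
  · exact hv3 z ⟨by rw [Nat.sub_self]; trivial, hz1⟩

/-- Ascending chain of "iterated annihilator" submodules. -/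
def zChain (S : LieSuperStruct F L) : ℕ → Submodule F L
  | 0 => ⊥
  | n + 1 => killsInto S (zChain S n)

lemma zChain_le_succ (S : LieSuperStruct F L) : ∀ n, zChain S n ≤ zChain S (n + 1) := by
  intro n
  induction n with
  | zero => exact bot_le
  | succ n ih => exact fun v hv z hz => ih (hv z hz)

lemma zChain_mono (S : LieSuperStruct F L) : Monotone (zChain S) :=
  monotone_nat_of_le_succ (zChain_le_succ S)

lemma zChain_inv (S : LieSuperStruct F L) :
    ∀ n, ∀ z : L, z ∈ S.L0 ∨ z ∈ S.L1 → ∀ v ∈ zChain S n, S.bracket z v ∈ zChain S n := by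
  intro n
  induction n with
  | zero =>
    intro z hz v hv
    have : v = 0 := by simpa [zChain] using hv
    rw [this, map_zero]
    simp
  | succ n ih =>
    intro z hz v hv
    exact zChain_le_succ S n (hv z hz)

lemma zChain_graded (S : LieSuperStruct F L) :
    ∀ n, ∀ v ∈ zChain S n, ∀ a ∈ S.L0, ∀ b ∈ S.L1,
      v = a + b → a ∈ zChain S n ∧ b ∈ zChain S n := by
  intro n
  induction n with
  | zero =>
    intro v hv a ha b hb hsum
    have hv0 : v = 0 := by simpa [zChain] using hv
    have hab : a = -b := by rw [hv0] at hsum; exact eq_neg_of_add_eq_zero_left hsum.symm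
    have hbmem : b ∈ S.L0 ⊓ S.L1 := ⟨by rw [show b = -a by rw [hab]; abel]; exact S.L0.neg_mem ha, hb⟩
    have hb0 : b = 0 := by
      have := S.compl.disjoint.le_bot hbmem
      simpa using this
    have ha0 : a = 0 := by rw [hab, hb0]; simp
    constructor <;> simp [ha0, hb0]
  | succ n ih =>
    intro v hv a ha b hb hsum
    have main : ∀ z : L, z ∈ S.L0 ∨ z ∈ S.L1 →
        S.bracket z a ∈ zChain S n ∧ S.bracket z b ∈ zChain S n := by
      intro z hz
      have hw : S.bracket z v ∈ zChain S n := hv z hz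
      have hsplit : S.bracket z v = S.bracket z a + S.bracket z b := by
        rw [hsum, map_add]
      rcases hz with hz0 | hz1
      · exact ih _ hw _ (S.grade00 z hz0 a ha) _ (S.grade01 z hz0 b hb) hsplit
      · have := ih _ hw _ (S.grade11 z hz1 b hb) _ (S.grade10 z hz1 a ha)
          (by rw [hsplit]; abel)
        exact ⟨this.2, this.1⟩
    exact ⟨fun z hz => (main z hz).1, fun z hz => (main z hz).2⟩

lemma zChain_top [FiniteDimensional F L] (hchar : ringChar F ≠ 2)
    (S : LieSuperStruct F L)
    (h : ∀ x : L, x ∈ S.L0 ∨ x ∈ S.L1 → IsNilpotent (S.ad x)) :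
    zChain S (Module.finrank F L + 1) = ⊤ := by
  set D := Module.finrank F L with hD
  by_contra hne
  have hgrow : ∀ n, zChain S n ≠ ⊤ → zChain S n < zChain S (n + 1) := by
    intro n hn
    obtain ⟨v, hv1, hv2⟩ := exists_vector hchar S h (zChain S n) hn (zChain_inv S n)
    exact lt_of_le_of_ne (zChain_le_succ S n) (fun e => hv1 (e ▸ hv2))
  have hrank : ∀ k, k ≤ D + 1 → k ≤ Module.finrank F (zChain S k) := by
    intro k
    induction k with
    | zero => intro _; exact Nat.zero_le _
    | succ k ih =>
      intro hk
      have hkne : zChain S k ≠ ⊤ := by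
        intro e
        exact hne (top_le_iff.mp (e ▸ zChain_mono S (by omega : k ≤ D + 1)))
      have h1 := Submodule.finrank_lt_finrank_of_lt (hgrow k hkne)
      have h2 := ih (by omega)
      omega
  have h3 := hrank (D + 1) le_rfl
  have h4 : Module.finrank F (zChain S (D + 1)) ≤ D := Submodule.finrank_le _
  omega

theorem engel_superalgebra' {F L : Type*} [Field F] [AddCommGroup L] [Module F L]
    [FiniteDimensional F L] (hchar : ringChar F ≠ 2) (S : LieSuperStruct F L)
    (h : ∀ x : L, x ∈ S.L0 ∨ x ∈ S.L1 → IsNilpotent (S.ad x)) :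
    S.IsNilpotent := by
  classical
  set D := Module.finrank F L with hD
  have hdesc : ∀ j, ∀ a ∈ zChain S (j + 1), ∀ y : L, S.bracket a y ∈ zChain S j := by
    intro j a ha y
    obtain ⟨a0, a1, ha0, ha1, hasum⟩ :=
      Submodule.codisjoint_iff_exists_add_eq.mp S.compl.codisjoint a
    obtain ⟨hA0, hA1⟩ := zChain_graded S (j+1) a ha a0 ha0 a1 ha1 hasum.symm
    obtain ⟨y0, y1, hy0, hy1, hysum⟩ :=
      Submodule.codisjoint_iff_exists_add_eq.mp S.compl.codisjoint y
    have hbr : ∀ c ∈ zChain S (j + 1), ∀ z : L, z ∈ S.L0 ∨ z ∈ S.L1 →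
        S.bracket z c ∈ zChain S j := fun c hc z hz => hc z hz
    have e1 : S.bracket a0 y ∈ zChain S j := by
      rw [S.anti_even a0 ha0 y]
      refine (zChain S j).neg_mem ?_
      rw [← hysum]
      have : S.bracket (y0 + y1) a0 = S.bracket y0 a0 + S.bracket y1 a0 := by
        rw [map_add]; rfl
      rw [this]
      exact (zChain S j).add_mem (hbr a0 hA0 y0 (Or.inl hy0)) (hbr a0 hA0 y1 (Or.inr hy1))
    have e2 : S.bracket a1 y ∈ zChain S j := by
      rw [← hysum, map_add]
      have t1 : S.bracket a1 y0 ∈ zChain S j := by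
        have : S.bracket a1 y0 = -S.bracket y0 a1 := by
          rw [S.anti_even y0 hy0 a1]; simp
        rw [this]
        exact (zChain S j).neg_mem (hbr a1 hA1 y0 (Or.inl hy0))
      have t2 : S.bracket a1 y1 ∈ zChain S j := by
        rw [S.anti_odd a1 ha1 y1 hy1]
        exact hbr a1 hA1 y1 (Or.inr hy1)
      exact (zChain S j).add_mem t1 t2
    have : S.bracket a y = S.bracket a0 y + S.bracket a1 y := by
      rw [← hasum, map_add]; rfl
    rw [this]
    exact (zChain S j).add_mem e1 e2
  have hlcs : ∀ j, S.lcs j ≤ zChain S (D + 1 - j) := by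
    intro j
    induction j with
    | zero =>
      rw [show S.lcs 0 = ⊤ from rfl, Nat.sub_zero]
      exact le_of_eq (zChain_top hchar S h).symm
    | succ j ih =>
      rw [show S.lcs (j+1) = S.bracketSpan (S.lcs j) ⊤ from rfl, LieSuperStruct.bracketSpan,
        Submodule.span_le]
      rintro w ⟨x, hx, y, -, rfl⟩
      by_cases hj : j ≤ D
      · have hx' : x ∈ zChain S ((D + 1 - (j + 1)) + 1) := by
          rw [show (D + 1 - (j + 1)) + 1 = D + 1 - j by omega]
          exact ih hx
        exact hdesc _ x hx' y
      · have hx' : x ∈ zChain S 0 := by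
          rw [show (0:ℕ) = D + 1 - j by omega]
          exact ih hx
        have : x = 0 := by simpa [zChain] using hx'
        rw [this, map_zero]
        simp
  refine ⟨D + 1, le_bot_iff.mp ?_⟩
  have := hlcs (D + 1)
  rwa [Nat.sub_self] at this

end EngelAux

/-- Engel's theorem for Lie superalgebras. -/
theorem engel_superalgebra {F L : Type*} [Field F] [AddCommGroup L] [Module F L]
    [FiniteDimensional F L] (hchar : ringChar F ≠ 2) (S : LieSuperStruct F L)
    (h : ∀ x : L, x ∈ S.L0 ∨ x ∈ S.L1 → IsNilpotent (S.ad x)) :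
    S.IsNilpotent := by
  exact engel_superalgebra' hchar S h
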